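/- (Bit–phase error relation for M > 2.) Let θ be a real number and let (a_i^j, a_x^j, a_y^j, a_z^j)_{j∈S} be a finite family of quadruples of complex numbers. Define N' := ∑_{j∈S} [2|a_i^j|² sin²θ + |a_x^j|² + (1+cos²θ)|a_y^j|² + |a_z^j|²] and assume N' > 0. Define p_x := (1/N')·∑_j sin²θ·(|a_x^j|² + |a_z^j|²), p_y := (1/N')·∑_j (2|a_y^j|² + cos²θ·(|a_x^j|² + |a_z^j|²)), p_z := (1/N')·∑_j (|a_x^j|² + |a_z^j|² + 2cos²θ·|a_y^j|²), and set the bit error rate e_b := p_x + p_y and the phase error rate e_p := p_y + p_z. Then e_p = (1 + cos²θ)·e_b. -/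

import Mathlib

theorem bit_phase_error_relation_M_gt_two
    {ι : Type*} [Fintype ι] (θ : ℝ) (ai ax ay az : ι → ℂ)
    (N' : ℝ)
    (hN'def : N' = ∑ j : ι,
      (2 * ‖ai j‖ ^ 2 * Real.sin θ ^ 2 + ‖ax j‖ ^ 2 +
        (1 + Real.cos θ ^ 2) * ‖ay j‖ ^ 2 + ‖az j‖ ^ 2))
    (hN' : 0 < N')
    (px py pz eb ep : ℝ)
    (hpx : px = (1 / N') * ∑ j : ι,
      Real.sin θ ^ 2 * (‖ax j‖ ^ 2 + ‖az j‖ ^ 2))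
    (hpy : py = (1 / N') * ∑ j : ι,
      (2 * ‖ay j‖ ^ 2 +
        Real.cos θ ^ 2 * (‖ax j‖ ^ 2 + ‖az j‖ ^ 2)))
    (hpz : pz = (1 / N') * ∑ j : ι,
      (‖ax j‖ ^ 2 + ‖az j‖ ^ 2 +
        2 * Real.cos θ ^ 2 * ‖ay j‖ ^ 2))
    (heb : eb = px + py) (hep : ep = py + pz) :
    ep = (1 + Real.cos θ ^ 2) * eb := by
  have hs : Real.sin θ ^ 2 = 1 - Real.cos θ ^ 2 := by
    have := Real.sin_sq_add_cos_sq θ; linarith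
  subst heb hep hpx hpy hpz
  simp only [← Finset.mul_sum, ← mul_add, ← Finset.sum_add_distrib, hs]
  rw [mul_left_comm]
  congr 1
  simp only [Finset.mul_sum, ← Finset.sum_add_distrib]
  exact Finset.sum_congr rfl fun j _ => by ring
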